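/- Let $\tilde p(s,a,y)=(2\pi s)^{-1/2}\exp(-|y-a|^2/(2s))$ be the Gaussian density, and let $p(t,a,y)=\tilde p(v(t),a,y)$ where $v(t)>0$ satisfies $c_1 t\le v(t)\le c_2 t$ for constants $0<c_1\le c_2$ and all $t\in(0,T]$. Then: (a) $p(t,a,y)\le C t^{-1/2}$ for all $t\in(0,T]$ and $a,y\in\mathbb R$, with $C$ depending only on $c_1$; (b) for any $\delta\in(0,1/2)$, $a\in\mathbb R$, and measurable $f,g:[0,T]\to\mathbb R$ with $\|f-g\|_{L^\infty}<\delta$, one has $\int_0^T|p(t,a,f(t))-p(t,a,g(t))|\,dt\le C'\delta\log(1/\delta)$, with $C'$ depending only on $c_1,c_2,T$. -/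

import Mathlib

open MeasureTheory Real Set

noncomputable def gaussp (v : ℝ → ℝ) (t a y : ℝ) : ℝ :=
  (2 * Real.pi * v t) ^ (-(1 : ℝ) / 2) * Real.exp (-((y - a) ^ 2 / (2 * v t)))

lemma gaussp_nonneg (v : ℝ → ℝ) {t : ℝ} (hvt : 0 < v t) (a y : ℝ) :
    0 ≤ gaussp v t a y := by
  unfold gaussp
  positivity

lemma gaussp_bound {c1 : ℝ} (hc1 : 0 < c1) (v : ℝ → ℝ) {t : ℝ} (ht : 0 < t)
    (hv : c1 * t ≤ v t) (a y : ℝ) :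
    gaussp v t a y ≤ c1 ^ (-(1:ℝ)/2) * t ^ (-(1:ℝ)/2) := by
  have hvt : 0 < v t := lt_of_lt_of_le (by positivity) hv
  have hexp : Real.exp (-((y - a) ^ 2 / (2 * v t))) ≤ 1 := by
    apply Real.exp_le_one_iff.mpr
    have : 0 ≤ (y - a) ^ 2 / (2 * v t) := by positivity
    linarith
  have h2 : (2 * Real.pi * v t) ^ (-(1:ℝ)/2) ≤ (c1 * t) ^ (-(1:ℝ)/2) := by
    apply Real.rpow_le_rpow_of_nonpos (by positivity) ?_ (by norm_num)
    nlinarith [Real.pi_gt_three]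
  calc gaussp v t a y ≤ (2 * Real.pi * v t) ^ (-(1:ℝ)/2) * 1 := by
        unfold gaussp
        exact mul_le_mul_of_nonneg_left hexp (Real.rpow_nonneg (by positivity) _)
    _ = (2 * Real.pi * v t) ^ (-(1:ℝ)/2) := mul_one _
    _ ≤ (c1 * t) ^ (-(1:ℝ)/2) := h2
    _ = c1 ^ (-(1:ℝ)/2) * t ^ (-(1:ℝ)/2) := Real.mul_rpow hc1.le ht.le

lemma gauss_lip {s : ℝ} (hs : 0 < s) (a y z : ℝ) :
    |(2 * Real.pi * s) ^ (-(1 : ℝ) / 2) * Real.exp (-((y - a) ^ 2 / (2 * s))) -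
     (2 * Real.pi * s) ^ (-(1 : ℝ) / 2) * Real.exp (-((z - a) ^ 2 / (2 * s)))| ≤
    (1 / s) * |y - z| := by
  set A := (2 * Real.pi * s) ^ (-(1 : ℝ) / 2) with hA
  set φ : ℝ → ℝ := fun w => A * Real.exp (-((w - a) ^ 2 / (2 * s))) with hφ
  set φ' : ℝ → ℝ := fun w => A * (Real.exp (-((w - a) ^ 2 / (2 * s))) * (-((w - a) / s))) with hφ'
  have hd : ∀ w, HasDerivAt φ (φ' w) w := by
    intro w
    have h1 : HasDerivAt (fun w : ℝ => (w - a) ^ 2) (2 * (w - a)) w := by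
      simpa using ((hasDerivAt_id w).sub_const a).fun_pow 2
    have h0 : HasDerivAt (fun w : ℝ => -((w - a) ^ 2 / (2 * s))) (-((w - a) / s)) w := by
      have h2 := (h1.div_const (2 * s)).fun_neg
      refine h2.congr_deriv ?_
      ring
    exact (h0.exp).const_mul A
  have hApos : 0 ≤ A := Real.rpow_nonneg (by positivity) _
  have hu : 0 < Real.sqrt s := Real.sqrt_pos.mpr hs
  have hAle : A ≤ (Real.sqrt s)⁻¹ := by
    have h1 : A ≤ s ^ (-(1:ℝ)/2) := by
      apply Real.rpow_le_rpow_of_nonpos hs ?_ (by norm_num)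
      nlinarith [Real.pi_gt_three]
    have h2 : s ^ (-(1:ℝ)/2) = (Real.sqrt s)⁻¹ := by
      rw [Real.sqrt_eq_rpow, ← Real.rpow_neg hs.le]
      norm_num
    linarith [h2 ▸ h1]
  have hbound : ∀ w, ‖φ' w‖ ≤ 1 / s := by
    intro w
    set x := w - a with hx
    set q := x ^ 2 / (2 * s) with hq
    have hq0 : 0 ≤ q := by positivity
    have he : Real.exp (-q) = (Real.exp q)⁻¹ := Real.exp_neg q
    have hkey : A * |x| * Real.exp (-q) ≤ 1 := by
      have h3 : |x| ≤ Real.sqrt s * (1 + q) := by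
        have hsq : Real.sqrt s ^ 2 = s := Real.sq_sqrt hs.le
        have habs : |x| ^ 2 = x ^ 2 := sq_abs x
        have h4 : 0 ≤ (Real.sqrt s - |x|) ^ 2 := sq_nonneg _
        have key2 : 2 * Real.sqrt s * |x| ≤ Real.sqrt s ^ 2 + x ^ 2 := by nlinarith
        apply le_of_mul_le_mul_right ?_ (by positivity : (0:ℝ) < 2 * s)
        have hqe : q * (2 * s) = x ^ 2 := by rw [hq]; field_simp
        have hexpand : Real.sqrt s * (1 + q) * (2 * s) =
            2 * s * Real.sqrt s + Real.sqrt s * (q * (2 * s)) := by ring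
        rw [hexpand, hqe]
        nlinarith [mul_le_mul_of_nonneg_left key2 hu.le, abs_nonneg x]
      have h5 : A * |x| ≤ 1 + q := by
        calc A * |x| ≤ (Real.sqrt s)⁻¹ * (Real.sqrt s * (1 + q)) := by
              apply mul_le_mul hAle h3 (abs_nonneg x) (by positivity)
          _ = 1 + q := by field_simp
      have h6 : 1 + q ≤ Real.exp q := by linarith [Real.add_one_le_exp q]
      calc A * |x| * Real.exp (-q) ≤ (1 + q) * Real.exp (-q) := by
            apply mul_le_mul_of_nonneg_right h5 (Real.exp_nonneg _)
        _ ≤ Real.exp q * Real.exp (-q) := by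
            apply mul_le_mul_of_nonneg_right h6 (Real.exp_nonneg _)
        _ = 1 := by rw [← Real.exp_add]; simp
    have hnorm : ‖φ' w‖ = A * |x| * Real.exp (-q) / s := by
      rw [hφ']
      simp only [Real.norm_eq_abs, abs_mul, abs_neg, abs_div, abs_of_nonneg hApos,
        abs_of_pos hs, abs_of_pos (Real.exp_pos _)]
      ring
    rw [hnorm]
    gcongr
  have key := Convex.norm_image_sub_le_of_norm_hasDerivWithin_le
    (fun w _ => (hd w).hasDerivWithinAt) (fun w _ => hbound w) convex_univ
    (Set.mem_univ z) (Set.mem_univ y)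
  simpa [Real.norm_eq_abs, hφ] using key

theorem stmt7 (c1 c2 : ℝ) (hc1 : 0 < c1) (hc12 : c1 ≤ c2) :
    (∃ C > 0, ∀ T > 0, ∀ v : ℝ → ℝ,
      (∀ t ∈ Set.Ioc (0 : ℝ) T, c1 * t ≤ v t ∧ v t ≤ c2 * t) →
      ∀ t ∈ Set.Ioc (0 : ℝ) T, ∀ a y : ℝ,
        gaussp v t a y ≤ C * t ^ (-(1 : ℝ) / 2)) ∧
    (∀ T > 0, ∃ C' > 0, ∀ v : ℝ → ℝ, Measurable v →
      (∀ t ∈ Set.Ioc (0 : ℝ) T, c1 * t ≤ v t ∧ v t ≤ c2 * t) →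
      ∀ δ ∈ Set.Ioo (0 : ℝ) (1 / 2), ∀ a : ℝ, ∀ f g : ℝ → ℝ,
        Measurable f → Measurable g →
        (∀ t ∈ Set.Icc (0 : ℝ) T, |f t - g t| < δ) →
        ∫ t in Set.Ioc (0 : ℝ) T, |gaussp v t a (f t) - gaussp v t a (g t)| ≤
          C' * δ * Real.log (1 / δ)) := by
  constructor
  · exact ⟨c1 ^ (-(1:ℝ)/2), Real.rpow_pos_of_pos hc1 _,
      fun T hT v hv t ht a y => gaussp_bound hc1 v ht.1 (hv t ht).1 a y⟩
  · intro T hT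
    set M := max (Real.log T) 0 with hM
    have hM0 : 0 ≤ M := le_max_right _ _
    have hlog2 : 0 < Real.log 2 := Real.log_pos (by norm_num)
    set c := c1 ^ (-(1:ℝ)/2) with hc
    have hcpos : 0 < c := Real.rpow_pos_of_pos hc1 _
    refine ⟨(4 * c + M / c1) / Real.log 2 + 2 / c1, ?_, ?_⟩
    · have h1 : 0 ≤ (4 * c + M / c1) / Real.log 2 := by positivity
      have h2 : 0 < 2 / c1 := by positivity
      linarith
    intro v hvm hv δ hδ a f g hf hg hfg
    obtain ⟨hδ0, hδhalf⟩ := hδ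
    set L := Real.log (1 / δ) with hL
    have hL2 : Real.log 2 ≤ L := by
      apply Real.log_le_log (by norm_num)
      rw [le_div_iff₀ hδ0]
      linarith
    have hLpos : 0 < L := lt_of_lt_of_le hlog2 hL2
    set s0 := min (δ ^ 2) T with hs0
    have hs0pos : 0 < s0 := lt_min (by positivity) hT
    have hs0T : s0 ≤ T := min_le_right _ _
    -- pointwise bounds
    have hb1 : ∀ t ∈ Set.Ioc (0:ℝ) T,
        |gaussp v t a (f t) - gaussp v t a (g t)| ≤ 2 * c * t ^ (-(1:ℝ)/2) := by
      intro t ht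
      have hvt : (0:ℝ) < v t := lt_of_lt_of_le (mul_pos hc1 ht.1) (hv t ht).1
      have h1 := gaussp_bound hc1 v ht.1 (hv t ht).1 a (f t)
      have h2 := gaussp_bound hc1 v ht.1 (hv t ht).1 a (g t)
      have h3 := gaussp_nonneg v hvt a (f t)
      have h4 := gaussp_nonneg v hvt a (g t)
      rw [abs_le]
      constructor <;> nlinarith
    have hb2 : ∀ t ∈ Set.Ioc (0:ℝ) T,
        |gaussp v t a (f t) - gaussp v t a (g t)| ≤ δ / (c1 * t) := by
      intro t ht
      have hvt : (0:ℝ) < v t := lt_of_lt_of_le (mul_pos hc1 ht.1) (hv t ht).1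
      have hlip := gauss_lip hvt a (f t) (g t)
      have hfg' : |f t - g t| ≤ δ := (hfg t ⟨ht.1.le, ht.2⟩).le
      calc |gaussp v t a (f t) - gaussp v t a (g t)|
          ≤ (1 / v t) * |f t - g t| := by simpa [gaussp] using hlip
        _ ≤ (1 / (c1 * t)) * δ := by
            apply mul_le_mul ?_ hfg' (abs_nonneg _) (one_div_pos.mpr (mul_pos hc1 ht.1)).le
            exact one_div_le_one_div_of_le (mul_pos hc1 ht.1) (hv t ht).1
        _ = δ / (c1 * t) := by ring
    -- majorant
    set G : ℝ → ℝ := fun t => if t ≤ s0 then 2 * c * t ^ (-(1:ℝ)/2) else δ / (c1 * t) with hG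
    have hi1 : IntegrableOn (fun t : ℝ => 2 * c * t ^ (-(1:ℝ)/2)) (Set.Ioc 0 s0) := by
      have h := (intervalIntegral.intervalIntegrable_rpow' (a := 0) (b := s0)
        (r := -(1:ℝ)/2) (by norm_num)).const_mul (2 * c)
      rwa [intervalIntegrable_iff_integrableOn_Ioc_of_le hs0pos.le] at h
    have hi2 : IntegrableOn (fun t : ℝ => δ / (c1 * t)) (Set.Ioc s0 T) := by
      apply (ContinuousOn.integrableOn_Icc ?_).mono_set Set.Ioc_subset_Icc_self
      apply ContinuousOn.div continuousOn_const (by fun_prop)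
      intro x hx
      have : 0 < x := lt_of_lt_of_le hs0pos hx.1
      positivity
    have hG1 : IntegrableOn G (Set.Ioc 0 s0) := by
      apply hi1.congr_fun ?_ measurableSet_Ioc
      intro t ht
      simp [hG, if_pos ht.2]
    have hG2 : IntegrableOn G (Set.Ioc s0 T) := by
      apply hi2.congr_fun ?_ measurableSet_Ioc
      intro t ht
      simp [hG, if_neg (not_le.mpr ht.1)]
    have hunion : Set.Ioc (0:ℝ) s0 ∪ Set.Ioc s0 T = Set.Ioc 0 T :=
      Set.Ioc_union_Ioc_eq_Ioc hs0pos.le hs0T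
    have hGint : IntegrableOn G (Set.Ioc 0 T) := by
      rw [← hunion]; exact hG1.union hG2
    -- monotonicity
    have hmono : ∫ t in Set.Ioc (0:ℝ) T, |gaussp v t a (f t) - gaussp v t a (g t)| ≤
        ∫ t in Set.Ioc (0:ℝ) T, G t := by
      apply integral_mono_of_nonneg (Filter.Eventually.of_forall fun t => abs_nonneg _) hGint
      rw [Filter.EventuallyLE, ae_restrict_iff' measurableSet_Ioc]
      apply Filter.Eventually.of_forall
      intro t ht
      by_cases h : t ≤ s0
      · rw [hG]; simp only [if_pos h]; exact hb1 t ht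
      · rw [hG]; simp only [if_neg h]; exact hb2 t ht
    -- splitting
    have hsplit : ∫ t in Set.Ioc (0:ℝ) T, G t =
        (∫ t in Set.Ioc (0:ℝ) s0, G t) + ∫ t in Set.Ioc s0 T, G t := by
      rw [← hunion]
      exact setIntegral_union (Set.Ioc_disjoint_Ioc_of_le le_rfl) measurableSet_Ioc hG1 hG2
    -- first piece
    have hI1 : ∫ t in Set.Ioc (0:ℝ) s0, G t ≤ 4 * c * δ := by
      have he : ∫ t in Set.Ioc (0:ℝ) s0, G t =
          ∫ t in Set.Ioc (0:ℝ) s0, 2 * c * t ^ (-(1:ℝ)/2) := by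
        apply setIntegral_congr_fun measurableSet_Ioc
        intro t ht
        simp [hG, if_pos ht.2]
      rw [he, ← intervalIntegral.integral_of_le hs0pos.le,
        intervalIntegral.integral_const_mul, integral_rpow (Or.inl (by norm_num))]
      have h0 : (0:ℝ) ^ (-(1:ℝ)/2 + 1) = 0 := Real.zero_rpow (by norm_num)
      rw [h0]
      have hsq : s0 ^ (-(1:ℝ)/2 + 1) = Real.sqrt s0 := by
        rw [Real.sqrt_eq_rpow]; norm_num
      have hle : Real.sqrt s0 ≤ δ := by
        calc Real.sqrt s0 ≤ Real.sqrt (δ ^ 2) := Real.sqrt_le_sqrt (min_le_left _ _)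
          _ = δ := Real.sqrt_sq hδ0.le
      rw [hsq]
      have : (Real.sqrt s0 - 0) / (-(1:ℝ)/2 + 1) = 2 * Real.sqrt s0 := by ring
      rw [this]
      nlinarith [Real.sqrt_nonneg s0]
    -- second piece
    have hI2 : ∫ t in Set.Ioc s0 T, G t ≤ δ / c1 * (M + 2 * L) := by
      have he : ∫ t in Set.Ioc s0 T, G t = ∫ t in Set.Ioc s0 T, δ / c1 * (1 / t) := by
        apply setIntegral_congr_fun measurableSet_Ioc
        intro t ht
        rw [hG]
        simp only [if_neg (not_le.mpr ht.1)]
        rw [div_mul_div_comm, mul_one]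
      have hmem : (0:ℝ) ∉ Set.uIcc s0 T := by
        rw [Set.uIcc_of_le hs0T]
        intro h
        exact absurd h.1 (not_le.mpr hs0pos)
      rw [he, ← intervalIntegral.integral_of_le hs0T,
        intervalIntegral.integral_const_mul, integral_one_div hmem]
      have hlog : Real.log (T / s0) ≤ M + 2 * L := by
        rcases min_cases (δ ^ 2) T with ⟨h1, h2⟩ | ⟨h1, h2⟩
        · rw [hs0, h1, Real.log_div hT.ne' (by positivity), Real.log_pow]
          have hLeq : L = -Real.log δ := by
            rw [hL, one_div, Real.log_inv]
          have : Real.log T ≤ M := le_max_left _ _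
          push_cast
          linarith
        · rw [hs0, h1, div_self hT.ne', Real.log_one]
          linarith
      have hd : 0 ≤ δ / c1 := by positivity
      calc δ / c1 * Real.log (T / s0) ≤ δ / c1 * (M + 2 * L) :=
        mul_le_mul_of_nonneg_left hlog hd
      _ = δ / c1 * (M + 2 * L) := rfl
    -- combine
    calc ∫ t in Set.Ioc (0:ℝ) T, |gaussp v t a (f t) - gaussp v t a (g t)|
        ≤ ∫ t in Set.Ioc (0:ℝ) T, G t := hmono
      _ = (∫ t in Set.Ioc (0:ℝ) s0, G t) + ∫ t in Set.Ioc s0 T, G t := hsplit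
      _ ≤ 4 * c * δ + δ / c1 * (M + 2 * L) := add_le_add hI1 hI2
      _ ≤ ((4 * c + M / c1) / Real.log 2 + 2 / c1) * δ * L := by
          have h1 : (4 * c + M / c1) ≤ (4 * c + M / c1) / Real.log 2 * L := by
            rw [div_mul_eq_mul_div, le_div_iff₀ hlog2]
            have : 0 ≤ 4 * c + M / c1 := by positivity
            nlinarith
          have h4 : δ * (4 * c + M / c1) ≤ ((4 * c + M / c1) / Real.log 2) * (δ * L) := by
            calc δ * (4 * c + M / c1) ≤ δ * ((4 * c + M / c1) / Real.log 2 * L) :=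
                mul_le_mul_of_nonneg_left h1 hδ0.le
              _ = ((4 * c + M / c1) / Real.log 2) * (δ * L) := by ring
          have e1 : 4 * c * δ + δ / c1 * (M + 2 * L) =
              δ * (4 * c + M / c1) + (2 / c1) * (δ * L) := by
            field_simp
            ring
          have e2 : ((4 * c + M / c1) / Real.log 2 + 2 / c1) * δ * L =
              ((4 * c + M / c1) / Real.log 2) * (δ * L) + (2 / c1) * (δ * L) := by ring
          rw [e1, e2]
          linarith
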